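/- If the tiling puzzle G is solvable, then Γ_G ⊢ start is intuitionistically derivable. -/

import Mathlib

set_option autoImplicit false

/-- Formulas of first-order intuitionistic logic over `→` and `∀` only. -/
inductive Fml : Type
  | atom : ℕ → List ℕ → Fml
  | imp : Fml → Fml → Fml
  | all : ℕ → Fml → Fml
deriving DecidableEq

namespace Fml

def fv : Fml → List ℕ
  | atom _ args => args
  | imp φ ψ => fv φ ++ fv ψ
  | all x φ => (fv φ).filter (fun y => y != x)

def rename (σ : ℕ → ℕ) : Fml → Fml
  | atom r args => atom r (args.map σ)
  | imp φ ψ => imp (rename σ φ) (rename σ ψ)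
  | all x φ => all x (rename (Function.update σ x x) φ)

def substV (φ : Fml) (x y : ℕ) : Fml := rename (Function.update id x y) φ

end Fml

def fvCtx (Γ : List Fml) : List ℕ := Γ.flatMap Fml.fv

/-- Intuitionistic provability (natural deduction) for the `(∀,→)` fragment. -/
inductive Prov : List Fml → Fml → Prop
  | ax {Γ φ} : φ ∈ Γ → Prov Γ φ
  | impI {Γ φ ψ} : Prov (φ :: Γ) ψ → Prov Γ (.imp φ ψ)
  | impE {Γ φ ψ} : Prov Γ (.imp φ ψ) → Prov Γ φ → Prov Γ ψ
  | allI {Γ x φ} : x ∉ fvCtx Γ → Prov Γ φ → Prov Γ (.all x φ)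
  | allE {Γ x φ} (y : ℕ) : Prov Γ (.all x φ) → Prov Γ (φ.substV x y)


/-- A deterministic tiling puzzle, with tiles `Fin k`. -/
structure Puzzle where
  k : ℕ
  R : Fin k → Fin k → Fin k → Fin k → Fin k
  E : Fin k
  ok : Fin k
  hEok : E ≠ ok

/-- The tiling determined by the puzzle. -/
def Puzzle.tiling (G : Puzzle) : ℕ → ℕ → Fin G.k
  | _, 0 => G.E
  | 0, _ + 1 => G.E
  | m + 1, n + 1 =>
      G.R (G.tiling m (n + 1)) (G.tiling m n) (G.tiling (m + 1) n) (G.tiling (m + 2) n)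
  termination_by m n => (n, m)

/-- `G` is solvable when the tile `ok` appears somewhere in `T_G`. -/
def Puzzle.Solvable (G : Puzzle) : Prop := ∃ m n : ℕ, G.tiling m n = G.ok

/-! The signature of `Γ_G`.  Relation symbols: `start` is `0`, `lupa` is `1`,
`pula` is `2`, `A` is `3`, `B` is `4`, `H` is `5`, `V` is `6`, and each tile
`t` gets the unary symbol `7 + t`. -/

def aStart : Fml := .atom 0 []
def aLupa : Fml := .atom 1 []
def aPula (x : ℕ) : Fml := .atom 2 [x]
def aA (x : ℕ) : Fml := .atom 3 [x]
def aB (x : ℕ) : Fml := .atom 4 [x]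
def aH (x y : ℕ) : Fml := .atom 5 [x, y]
def aV (x y : ℕ) : Fml := .atom 6 [x, y]
def aTile (G : Puzzle) (t : Fin G.k) (x : ℕ) : Fml := .atom (7 + (t : ℕ)) [x]

/-- `foralls [x₁,…,xₙ] φ = ∀x₁ … ∀xₙ φ`. -/
def foralls (vs : List ℕ) (φ : Fml) : Fml := vs.foldr .all φ

/-- `imps [φ₁,…,φₙ] ψ = φ₁ → ⋯ → φₙ → ψ`. -/
def imps (hs : List Fml) (ψ : Fml) : Fml := hs.foldr .imp ψ

/-- Formula (0), for a rule `R(K,L,M,N) = T`; the quantified variables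
`x y z u v` are `0 1 2 3 4`:
`∀xyzuv[K(y)→L(z)→M(u)→N(v)→V(z,y)→H(z,u)→H(u,v)→
        (T(x)→H(y,x)→V(u,x)→lupa)→pula(x)]`. -/
def fml0 (G : Puzzle) (K L M N : Fin G.k) : Fml :=
  foralls [0, 1, 2, 3, 4] <|
    imps [aTile G K 1, aTile G L 2, aTile G M 3, aTile G N 4,
          aV 2 1, aH 2 3, aH 3 4,
          imps [aTile G (G.R K L M N) 0, aH 1 0, aV 3 0] aLupa]
      (aPula 0)

/-- Formula (1): `∀x(E(x)→A(x)→B(x)→lupa) → start`. -/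
def fml1 (G : Puzzle) : Fml :=
  .imp (.all 0 (imps [aTile G G.E 0, aA 0, aB 0] aLupa)) aStart

/-- Formula (2): `∀x∀y(E(y)→A(y)→(H(y,x)→E(x)→A(x)→lupa)→pula(x))`. -/
def fml2 (G : Puzzle) : Fml :=
  foralls [0, 1] <|
    imps [aTile G G.E 1, aA 1, imps [aH 1 0, aTile G G.E 0, aA 0] aLupa] (aPula 0)

/-- Formula (3): `∀x∀y(E(y)→B(y)→(V(y,x)→E(x)→B(x)→lupa)→pula(x))`. -/
def fml3 (G : Puzzle) : Fml :=
  foralls [0, 1] <|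
    imps [aTile G G.E 1, aB 1, imps [aV 1 0, aTile G G.E 0, aB 0] aLupa] (aPula 0)

/-- Formula (4): `∀x(ok(x)→lupa)`. -/
def fml4 (G : Puzzle) : Fml := .all 0 (.imp (aTile G G.ok 0) aLupa)

/-- Formula (5): `∀x pula(x) → lupa`. -/
def fml5 : Fml := .imp (.all 0 (aPula 0)) aLupa

/-- The environment `Γ_G`: formulas (1)–(5) together with an instance of
formula (0) for every rule `R(K,L,M,N) = T` of the puzzle. -/
def GammaG (G : Puzzle) : List Fml :=
  [fml1 G, fml2 G, fml3 G, fml4 G, fml5] ++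
    ((List.finRange G.k).flatMap fun K =>
      (List.finRange G.k).flatMap fun L =>
        (List.finRange G.k).flatMap fun M =>
          (List.finRange G.k).map fun N => fml0 G K L M N)

namespace Aux
variable {G : Puzzle}

lemma tiling_e1 (G : Puzzle) (i : ℕ) : G.tiling i 0 = G.E := by
  cases i <;> simp [Puzzle.tiling]

lemma tiling_e2 (G : Puzzle) (j : ℕ) : G.tiling 0 j = G.E := by
  cases j <;> simp [Puzzle.tiling]

lemma tiling_succ (G : Puzzle) (m n : ℕ) :
    G.tiling (m+1) (n+1) = G.R (G.tiling m (n+1)) (G.tiling m n) (G.tiling (m+1) n) (G.tiling (m+2) n) := by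
  rw [Puzzle.tiling]

lemma fv_fml0 (K L M N : Fin G.k) : (fml0 G K L M N).fv = [] := rfl
lemma fv_fml1 : (fml1 G).fv = [] := rfl
lemma fv_fml2 : (fml2 G).fv = [] := rfl
lemma fv_fml3 : (fml3 G).fv = [] := rfl
lemma fv_fml4 : (fml4 G).fv = [] := rfl
lemma fv_fml5 : fml5.fv = [] := rfl

lemma fvCtx_GammaG : fvCtx (GammaG G) = [] := by
  apply List.flatMap_eq_nil_iff.mpr
  intro φ hφ
  simp [GammaG] at hφ
  rcases hφ with h|h|h|h|h|⟨K,L,M,N,rfl⟩ <;> first | (subst h; rfl) | rfl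

end Aux
namespace Aux
variable {G : Puzzle}

lemma pula_gen {Γ : List Fml} (x : ℕ) (hx : 5 ≤ x) (hfv : x ∉ fvCtx Γ)
    (h0 : (0:ℕ) ∉ fvCtx Γ) (h : Prov Γ (aPula x)) : Prov Γ (.all 0 (aPula 0)) := by
  have h1 : Prov Γ (.all x (.all 0 (aPula x))) := Prov.allI hfv (Prov.allI h0 h)
  have h2 := Prov.allE 0 h1
  have e : (Fml.all 0 (aPula x)).substV x 0 = Fml.all 0 (aPula 0) := by
    have hne : x ≠ 0 := by omega
    simp [Fml.substV, Fml.rename, aPula, Function.update_apply, hne]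
  rwa [e] at h2

lemma inst4 {Γ : List Fml} (v : ℕ) (hv : 5 ≤ v) (h : Prov Γ (fml4 G)) :
    Prov Γ (.imp (aTile G G.ok v) aLupa) := by
  have h2 := Prov.allE v h
  have e : (Fml.imp (aTile G G.ok 0) aLupa).substV 0 v = .imp (aTile G G.ok v) aLupa := by
    simp [Fml.substV, Fml.rename, aTile, aLupa, Function.update_apply]
  rwa [e] at h2

lemma inst2 {Γ : List Fml} (a b : ℕ) (ha : 5 ≤ a) (hb : 5 ≤ b) (h : Prov Γ (fml2 G)) :
    Prov Γ (imps [aTile G G.E b, aA b, imps [aH b a, aTile G G.E a, aA a] aLupa] (aPula a)) := by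
  have h1 : Prov Γ ((Fml.all 1 (imps [aTile G G.E 1, aA 1, imps [aH 1 0, aTile G G.E 0, aA 0] aLupa] (aPula 0))).substV 0 a) := Prov.allE a h
  have ha1 : a ≠ 1 := by omega
  have e1 : (Fml.all 1 (imps [aTile G G.E 1, aA 1, imps [aH 1 0, aTile G G.E 0, aA 0] aLupa] (aPula 0))).substV 0 a
      = Fml.all 1 (imps [aTile G G.E 1, aA 1, imps [aH 1 a, aTile G G.E a, aA a] aLupa] (aPula a)) := by
    simp [Fml.substV, Fml.rename, imps, aTile, aA, aH, aLupa, aPula, Function.update_apply, ha1]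
  rw [e1] at h1
  have h2 := Prov.allE b h1
  have e2 : (imps [aTile G G.E 1, aA 1, imps [aH 1 a, aTile G G.E a, aA a] aLupa] (aPula a)).substV 1 b
      = imps [aTile G G.E b, aA b, imps [aH b a, aTile G G.E a, aA a] aLupa] (aPula a) := by
    simp [Fml.substV, Fml.rename, imps, aTile, aA, aH, aLupa, aPula, Function.update_apply, ha1]
  rwa [e2] at h2

end Aux
namespace Aux
variable {G : Puzzle}

lemma inst3 {Γ : List Fml} (a b : ℕ) (ha : 5 ≤ a) (hb : 5 ≤ b) (h : Prov Γ (fml3 G)) :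
    Prov Γ (imps [aTile G G.E b, aB b, imps [aV b a, aTile G G.E a, aB a] aLupa] (aPula a)) := by
  have h1 : Prov Γ ((Fml.all 1 (imps [aTile G G.E 1, aB 1, imps [aV 1 0, aTile G G.E 0, aB 0] aLupa] (aPula 0))).substV 0 a) := Prov.allE a h
  have ha1 : a ≠ 1 := by omega
  have e1 : (Fml.all 1 (imps [aTile G G.E 1, aB 1, imps [aV 1 0, aTile G G.E 0, aB 0] aLupa] (aPula 0))).substV 0 a
      = Fml.all 1 (imps [aTile G G.E 1, aB 1, imps [aV 1 a, aTile G G.E a, aB a] aLupa] (aPula a)) := by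
    simp [Fml.substV, Fml.rename, imps, aTile, aB, aV, aLupa, aPula, Function.update_apply, ha1]
  rw [e1] at h1
  have h2 := Prov.allE b h1
  have e2 : (imps [aTile G G.E 1, aB 1, imps [aV 1 a, aTile G G.E a, aB a] aLupa] (aPula a)).substV 1 b
      = imps [aTile G G.E b, aB b, imps [aV b a, aTile G G.E a, aB a] aLupa] (aPula a) := by
    simp [Fml.substV, Fml.rename, imps, aTile, aB, aV, aLupa, aPula, Function.update_apply, ha1]
  rwa [e2] at h2

lemma inst0 {Γ : List Fml} (K L M N : Fin G.k) (a b c d e : ℕ)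
    (ha : 5 ≤ a) (hb : 5 ≤ b) (hc : 5 ≤ c) (hd : 5 ≤ d) (he : 5 ≤ e)
    (h : Prov Γ (fml0 G K L M N)) :
    Prov Γ (imps [aTile G K b, aTile G L c, aTile G M d, aTile G N e,
      aV c b, aH c d, aH d e,
      imps [aTile G (G.R K L M N) a, aH b a, aV d a] aLupa] (aPula a)) := by
  have ha1 : a ≠ 1 := by omega
  have ha2 : a ≠ 2 := by omega
  have ha3 : a ≠ 3 := by omega
  have ha4 : a ≠ 4 := by omega
  have hb2 : b ≠ 2 := by omega
  have hb3 : b ≠ 3 := by omega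
  have hb4 : b ≠ 4 := by omega
  have hc3 : c ≠ 3 := by omega
  have hc4 : c ≠ 4 := by omega
  have hd4 : d ≠ 4 := by omega
  have h1 : Prov Γ ((Fml.all 1 (Fml.all 2 (Fml.all 3 (Fml.all 4 (imps [aTile G K 1, aTile G L 2, aTile G M 3, aTile G N 4, aV 2 1, aH 2 3, aH 3 4, imps [aTile G (G.R K L M N) 0, aH 1 0, aV 3 0] aLupa] (aPula 0)))))).substV 0 a) := Prov.allE a h
  have e1 : (Fml.all 1 (Fml.all 2 (Fml.all 3 (Fml.all 4 (imps [aTile G K 1, aTile G L 2, aTile G M 3, aTile G N 4, aV 2 1, aH 2 3, aH 3 4, imps [aTile G (G.R K L M N) 0, aH 1 0, aV 3 0] aLupa] (aPula 0)))))).substV 0 a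
      = Fml.all 1 (Fml.all 2 (Fml.all 3 (Fml.all 4 (imps [aTile G K 1, aTile G L 2, aTile G M 3, aTile G N 4, aV 2 1, aH 2 3, aH 3 4, imps [aTile G (G.R K L M N) a, aH 1 a, aV 3 a] aLupa] (aPula a))))) := by
    simp [Fml.substV, Fml.rename, imps, aTile, aH, aV, aLupa, aPula, Function.update_apply, ha1, ha2, ha3, ha4]
  rw [e1] at h1
  have h2 := Prov.allE b h1
  have e2 : (Fml.all 2 (Fml.all 3 (Fml.all 4 (imps [aTile G K 1, aTile G L 2, aTile G M 3, aTile G N 4, aV 2 1, aH 2 3, aH 3 4, imps [aTile G (G.R K L M N) a, aH 1 a, aV 3 a] aLupa] (aPula a))))).substV 1 b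
      = Fml.all 2 (Fml.all 3 (Fml.all 4 (imps [aTile G K b, aTile G L 2, aTile G M 3, aTile G N 4, aV 2 b, aH 2 3, aH 3 4, imps [aTile G (G.R K L M N) a, aH b a, aV 3 a] aLupa] (aPula a)))) := by
    simp [Fml.substV, Fml.rename, imps, aTile, aH, aV, aLupa, aPula, Function.update_apply, ha1, ha2, ha3, ha4, hb2, hb3, hb4]
  rw [e2] at h2
  have h3 := Prov.allE c h2
  have e3 : (Fml.all 3 (Fml.all 4 (imps [aTile G K b, aTile G L 2, aTile G M 3, aTile G N 4, aV 2 b, aH 2 3, aH 3 4, imps [aTile G (G.R K L M N) a, aH b a, aV 3 a] aLupa] (aPula a)))).substV 2 c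
      = Fml.all 3 (Fml.all 4 (imps [aTile G K b, aTile G L c, aTile G M 3, aTile G N 4, aV c b, aH c 3, aH 3 4, imps [aTile G (G.R K L M N) a, aH b a, aV 3 a] aLupa] (aPula a))) := by
    simp [Fml.substV, Fml.rename, imps, aTile, aH, aV, aLupa, aPula, Function.update_apply, ha2, ha3, ha4, hb2, hb3, hb4, hc3, hc4]
  rw [e3] at h3
  have h4 := Prov.allE d h3
  have e4 : (Fml.all 4 (imps [aTile G K b, aTile G L c, aTile G M 3, aTile G N 4, aV c b, aH c 3, aH 3 4, imps [aTile G (G.R K L M N) a, aH b a, aV 3 a] aLupa] (aPula a))).substV 3 d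
      = Fml.all 4 (imps [aTile G K b, aTile G L c, aTile G M d, aTile G N 4, aV c b, aH c d, aH d 4, imps [aTile G (G.R K L M N) a, aH b a, aV d a] aLupa] (aPula a)) := by
    simp [Fml.substV, Fml.rename, imps, aTile, aH, aV, aLupa, aPula, Function.update_apply, ha3, ha4, hb3, hb4, hc3, hc4, hd4]
  rw [e4] at h4
  have h5 := Prov.allE e h4
  have e5 : (imps [aTile G K b, aTile G L c, aTile G M d, aTile G N 4, aV c b, aH c d, aH d 4, imps [aTile G (G.R K L M N) a, aH b a, aV d a] aLupa] (aPula a)).substV 4 e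
      = imps [aTile G K b, aTile G L c, aTile G M d, aTile G N e, aV c b, aH c d, aH d e, imps [aTile G (G.R K L M N) a, aH b a, aV d a] aLupa] (aPula a) := by
    simp [Fml.substV, Fml.rename, imps, aTile, aH, aV, aLupa, aPula, Function.update_apply, ha4, hb4, hc4, hd4]
  rwa [e5] at h5

end Aux
namespace Aux
variable {G : Puzzle}

def cvar (c : ℕ × ℕ) : ℕ := 5 + Nat.pair c.1 c.2

lemma cvar_ge (c : ℕ × ℕ) : 5 ≤ cvar c := Nat.le_add_right _ _

lemma cvar_inj {c d : ℕ × ℕ} (h : cvar c = cvar d) : c = d := by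
  unfold cvar at h
  have h2 : Nat.pair c.1 c.2 = Nat.pair d.1 d.2 := by omega
  have := Nat.pair_eq_pair.mp h2
  exact Prod.ext this.1 this.2

def prereq : ℕ × ℕ → List (ℕ × ℕ)
  | (0,0) => [(0,0)]
  | (i+1,0) => [(i,0)]
  | (0,j+1) => [(0,j)]
  | (i+1,j+1) => [(i,j+1),(i,j),(i+1,j),(i+2,j)]

def atoms (G : Puzzle) : ℕ × ℕ → List Fml
  | (0,0) => [aB (cvar (0,0)), aA (cvar (0,0)), aTile G G.E (cvar (0,0))]
  | (i+1,0) => [aA (cvar (i+1,0)), aTile G G.E (cvar (i+1,0)), aH (cvar (i,0)) (cvar (i+1,0))]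
  | (0,j+1) => [aB (cvar (0,j+1)), aTile G G.E (cvar (0,j+1)), aV (cvar (0,j)) (cvar (0,j+1))]
  | (i+1,j+1) => [aV (cvar (i+1,j)) (cvar (i+1,j+1)), aH (cvar (i,j+1)) (cvar (i+1,j+1)),
      aTile G (G.tiling (i+1) (j+1)) (cvar (i+1,j+1))]

def ctx (G : Puzzle) : List (ℕ × ℕ) → List Fml
  | [] => GammaG G
  | c :: cs => atoms G c ++ ctx G cs

def DC (done : List (ℕ × ℕ)) : Prop := ∀ c ∈ done, ∀ d ∈ prereq c, d ∈ done

lemma DC_cons {done : List (ℕ × ℕ)} {c : ℕ × ℕ} (h : ∀ d ∈ prereq c, d ∈ done)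
    (hDC : DC done) : DC (c :: done) := by
  intro x hx d hd
  rcases List.mem_cons.mp hx with rfl | hx
  · exact List.mem_cons_of_mem _ (h d hd)
  · exact List.mem_cons_of_mem _ (hDC x hx d hd)

lemma gamma_sub (done : List (ℕ × ℕ)) {φ : Fml} (h : φ ∈ GammaG G) : φ ∈ ctx G done := by
  induction done with
  | nil => exact h
  | cons c cs ih => exact List.mem_append_right _ ih

lemma atoms_sub {done : List (ℕ × ℕ)} {c : ℕ × ℕ} (hc : c ∈ done) {φ : Fml}
    (h : φ ∈ atoms G c) : φ ∈ ctx G done := by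
  induction done with
  | nil => simp at hc
  | cons x xs ih =>
    rcases List.mem_cons.mp hc with rfl | hc'
    · exact List.mem_append_left _ h
    · exact List.mem_append_right _ (ih hc')

lemma fv_atoms_sub (c : ℕ × ℕ) : ∀ y ∈ fvCtx (atoms G c),
    y = cvar c ∨ ∃ d ∈ prereq c, y = cvar d := by
  obtain ⟨i, j⟩ := c
  rcases i with _ | i <;> rcases j with _ | j <;>
    · intro y hy
      simp [atoms, prereq, fvCtx, aA, aB, aH, aV, aTile, Fml.fv] at hy ⊢
      tauto

lemma fv_ctx (done : List (ℕ × ℕ)) : ∀ y ∈ fvCtx (ctx G done),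
    ∃ c ∈ done, y = cvar c ∨ ∃ d ∈ prereq c, y = cvar d := by
  induction done with
  | nil => intro y hy; rw [ctx, fvCtx_GammaG] at hy; simp at hy
  | cons c cs ih =>
    intro y hy
    rw [ctx] at hy
    rcases (by simpa [fvCtx, List.mem_flatMap] using hy :
        (∃ a ∈ atoms G c, y ∈ a.fv) ∨ ∃ a ∈ ctx G cs, y ∈ a.fv) with ⟨a, ha, hya⟩ | ⟨a, ha, hya⟩
    · exact ⟨c, List.mem_cons_self,
        fv_atoms_sub c y (List.mem_flatMap.mpr ⟨a, ha, hya⟩)⟩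
    · obtain ⟨c', hc', h'⟩ := ih y (List.mem_flatMap.mpr ⟨a, ha, hya⟩)
      exact ⟨c', List.mem_cons_of_mem _ hc', h'⟩

lemma fresh {done : List (ℕ × ℕ)} {c : ℕ × ℕ} (hDC : DC done) (hc : c ∉ done) :
    cvar c ∉ fvCtx (ctx G done) := by
  intro h
  obtain ⟨c', hc', h'⟩ := fv_ctx done _ h
  rcases h' with h' | ⟨d, hd, h'⟩
  · exact hc (cvar_inj h' ▸ hc')
  · exact hc (cvar_inj h' ▸ hDC c' hc' d hd)

lemma zero_not_fv (done : List (ℕ × ℕ)) : (0:ℕ) ∉ fvCtx (ctx G done) := by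
  intro h
  obtain ⟨c', _, h'⟩ := fv_ctx done _ h
  rcases h' with h' | ⟨d, _, h'⟩ <;> · have := cvar_ge ‹_›; omega

lemma fml1_mem : fml1 G ∈ GammaG G := by simp [GammaG]
lemma fml2_mem : fml2 G ∈ GammaG G := by simp [GammaG]
lemma fml3_mem : fml3 G ∈ GammaG G := by simp [GammaG]
lemma fml4_mem : fml4 G ∈ GammaG G := by simp [GammaG]
lemma fml5_mem : fml5 ∈ GammaG G := by simp [GammaG]
lemma fml0_mem (K L M N : Fin G.k) : fml0 G K L M N ∈ GammaG G := by
  simp [GammaG, List.mem_flatMap]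
  exact Or.inr (Or.inr (Or.inr (Or.inr (Or.inr ⟨K, L, M, N, rfl⟩))))

lemma mem_atoms_tile (c : ℕ × ℕ) : aTile G (G.tiling c.1 c.2) (cvar c) ∈ atoms G c := by
  obtain ⟨i, j⟩ := c
  rcases i with _ | i <;> rcases j with _ | j <;>
    simp [atoms, tiling_e1, tiling_e2]

lemma mem_atoms_A (i : ℕ) : aA (cvar (i,0)) ∈ atoms G (i,0) := by
  cases i <;> simp [atoms]

lemma mem_atoms_B (j : ℕ) : aB (cvar (0,j)) ∈ atoms G (0,j) := by
  cases j <;> simp [atoms]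

lemma mem_atoms_H (i j : ℕ) : aH (cvar (i,j)) (cvar (i+1,j)) ∈ atoms G (i+1,j) := by
  cases j <;> simp [atoms]

lemma mem_atoms_V (i j : ℕ) : aV (cvar (i,j)) (cvar (i,j+1)) ∈ atoms G (i,j+1) := by
  cases i <;> simp [atoms]

end Aux
namespace Aux
variable {G : Puzzle}

lemma start_gen (G : Puzzle) (x : ℕ) (hx : 5 ≤ x)
    (h : Prov (GammaG G) (imps [aTile G G.E x, aA x, aB x] aLupa)) :
    Prov (GammaG G) aStart := by
  have h0 : Prov (GammaG G) (.all 0 (imps [aTile G G.E x, aA x, aB x] aLupa)) :=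
    Prov.allI (by simp [fvCtx_GammaG]) h
  have h1 : Prov (GammaG G) (.all x (.all 0 (imps [aTile G G.E x, aA x, aB x] aLupa))) :=
    Prov.allI (by simp [fvCtx_GammaG]) h0
  have h2 := Prov.allE 0 h1
  have e : (Fml.all 0 (imps [aTile G G.E x, aA x, aB x] aLupa)).substV x 0
      = .all 0 (imps [aTile G G.E 0, aA 0, aB 0] aLupa) := by
    have hne : x ≠ 0 := by omega
    simp [Fml.substV, Fml.rename, imps, aTile, aA, aB, aLupa, Function.update_apply, hne]
  rw [e] at h2
  exact Prov.impE (Prov.ax fml1_mem) h2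

lemma step_pula {done : List (ℕ × ℕ)} {c : ℕ × ℕ} (hDC : DC done) (hnew : c ∉ done)
    (h : Prov (ctx G done) (aPula (cvar c))) : Prov (ctx G done) aLupa := by
  refine Prov.impE (Prov.ax (gamma_sub done fml5_mem)) ?_
  exact pula_gen (cvar c) (cvar_ge c) (fresh hDC hnew) (zero_not_fv done) h

lemma createRow (G : Puzzle) (i : ℕ) (done : List (ℕ × ℕ)) (hm : (i,0) ∈ done)
    (hnew : (i+1,0) ∉ done) (hDC : DC done)
    (hk : Prov (ctx G ((i+1,0) :: done)) aLupa) : Prov (ctx G done) aLupa := by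
  apply step_pula hDC hnew
  have h := inst2 (G := G) (Γ := ctx G done) (cvar (i+1,0)) (cvar (i,0))
    (cvar_ge _) (cvar_ge _) (Prov.ax (gamma_sub done fml2_mem))
  have p1 : Prov (ctx G done) (aTile G G.E (cvar (i,0))) := by
    have := mem_atoms_tile (G := G) (i, 0)
    rw [tiling_e1] at this
    exact Prov.ax (atoms_sub hm this)
  have p2 : Prov (ctx G done) (aA (cvar (i,0))) := Prov.ax (atoms_sub hm (mem_atoms_A i))
  refine Prov.impE (Prov.impE (Prov.impE h p1) p2) ?_
  exact Prov.impI (Prov.impI (Prov.impI hk))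

lemma createCol (G : Puzzle) (j : ℕ) (done : List (ℕ × ℕ)) (hm : (0,j) ∈ done)
    (hnew : (0,j+1) ∉ done) (hDC : DC done)
    (hk : Prov (ctx G ((0,j+1) :: done)) aLupa) : Prov (ctx G done) aLupa := by
  apply step_pula hDC hnew
  have h := inst3 (G := G) (Γ := ctx G done) (cvar (0,j+1)) (cvar (0,j))
    (cvar_ge _) (cvar_ge _) (Prov.ax (gamma_sub done fml3_mem))
  have p1 : Prov (ctx G done) (aTile G G.E (cvar (0,j))) := by
    have := mem_atoms_tile (G := G) (0, j)
    rw [tiling_e2] at this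
    exact Prov.ax (atoms_sub hm this)
  have p2 : Prov (ctx G done) (aB (cvar (0,j))) := Prov.ax (atoms_sub hm (mem_atoms_B j))
  refine Prov.impE (Prov.impE (Prov.impE h p1) p2) ?_
  exact Prov.impI (Prov.impI (Prov.impI hk))

lemma createInt (G : Puzzle) (i j : ℕ) (done : List (ℕ × ℕ))
    (h1 : (i,j+1) ∈ done) (h2 : (i,j) ∈ done) (h3 : (i+1,j) ∈ done) (h4 : (i+2,j) ∈ done)
    (hnew : (i+1,j+1) ∉ done) (hDC : DC done)
    (hk : Prov (ctx G ((i+1,j+1) :: done)) aLupa) : Prov (ctx G done) aLupa := by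
  apply step_pula hDC hnew
  have h := inst0 (G := G) (Γ := ctx G done)
    (G.tiling i (j+1)) (G.tiling i j) (G.tiling (i+1) j) (G.tiling (i+2) j)
    (cvar (i+1,j+1)) (cvar (i,j+1)) (cvar (i,j)) (cvar (i+1,j)) (cvar (i+2,j))
    (cvar_ge _) (cvar_ge _) (cvar_ge _) (cvar_ge _) (cvar_ge _)
    (Prov.ax (gamma_sub done (fml0_mem _ _ _ _)))
  have p1 : Prov (ctx G done) (aTile G (G.tiling i (j+1)) (cvar (i,j+1))) :=
    Prov.ax (atoms_sub h1 (mem_atoms_tile (i,j+1)))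
  have p2 : Prov (ctx G done) (aTile G (G.tiling i j) (cvar (i,j))) :=
    Prov.ax (atoms_sub h2 (mem_atoms_tile (i,j)))
  have p3 : Prov (ctx G done) (aTile G (G.tiling (i+1) j) (cvar (i+1,j))) :=
    Prov.ax (atoms_sub h3 (mem_atoms_tile (i+1,j)))
  have p4 : Prov (ctx G done) (aTile G (G.tiling (i+2) j) (cvar (i+2,j))) :=
    Prov.ax (atoms_sub h4 (mem_atoms_tile (i+2,j)))
  have p5 : Prov (ctx G done) (aV (cvar (i,j)) (cvar (i,j+1))) :=
    Prov.ax (atoms_sub h1 (mem_atoms_V i j))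
  have p6 : Prov (ctx G done) (aH (cvar (i,j)) (cvar (i+1,j))) :=
    Prov.ax (atoms_sub h3 (mem_atoms_H i j))
  have p7 : Prov (ctx G done) (aH (cvar (i+1,j)) (cvar (i+2,j))) :=
    Prov.ax (atoms_sub h4 (mem_atoms_H (i+1) j))
  refine Prov.impE (Prov.impE (Prov.impE (Prov.impE (Prov.impE (Prov.impE (Prov.impE (Prov.impE h p1) p2) p3) p4) p5) p6) p7) ?_
  refine Prov.impI (Prov.impI (Prov.impI ?_))
  have e : G.R (G.tiling i (j+1)) (G.tiling i j) (G.tiling (i+1) j) (G.tiling (i+2) j)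
      = G.tiling (i+1) (j+1) := (tiling_succ G i j).symm
  rw [e]
  exact hk

end Aux
namespace Aux

lemma ensure (G : Puzzle) : ∀ (i j : ℕ) (done : List (ℕ × ℕ)),
    (0,0) ∈ done → DC done →
    (∀ done', DC done' → (∀ x ∈ done, x ∈ done') → (i, j) ∈ done' → Prov (ctx G done') aLupa) →
    Prov (ctx G done) aLupa
  | 0, 0, done, h00, hDC, k => k done hDC (fun x h => h) h00
  | 0, j+1, done, h00, hDC, k => by
    refine ensure G 0 j done h00 hDC ?_
    intro d1 hDC1 hs1 hm1
    by_cases hc1 : (0, j+1) ∈ d1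
    · exact k d1 hDC1 hs1 hc1
    · refine createCol G j d1 hm1 hc1 hDC1 ?_
      refine k ((0,j+1) :: d1) (DC_cons ?_ hDC1)
        (fun x h => List.mem_cons_of_mem _ (hs1 x h)) (List.mem_cons_self)
      intro d hd
      simp only [prereq, List.mem_singleton] at hd
      exact hd ▸ hm1
  | i+1, 0, done, h00, hDC, k => by
    refine ensure G i 0 done h00 hDC ?_
    intro d1 hDC1 hs1 hm1
    by_cases hc1 : (i+1, 0) ∈ d1
    · exact k d1 hDC1 hs1 hc1
    · refine createRow G i d1 hm1 hc1 hDC1 ?_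
      refine k ((i+1,0) :: d1) (DC_cons ?_ hDC1)
        (fun x h => List.mem_cons_of_mem _ (hs1 x h)) (List.mem_cons_self)
      intro d hd
      simp only [prereq, List.mem_singleton] at hd
      exact hd ▸ hm1
  | i+1, j+1, done, h00, hDC, k => by
    refine ensure G i (j+1) done h00 hDC ?_
    intro d1 hDC1 hs1 hm1
    refine ensure G i j d1 (hs1 _ h00) hDC1 ?_
    intro d2 hDC2 hs2 hm2
    refine ensure G (i+1) j d2 (hs2 _ (hs1 _ h00)) hDC2 ?_
    intro d3 hDC3 hs3 hm3
    refine ensure G (i+2) j d3 (hs3 _ (hs2 _ (hs1 _ h00))) hDC3 ?_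
    intro d4 hDC4 hs4 hm4
    by_cases hc4 : (i+1, j+1) ∈ d4
    · exact k d4 hDC4 (fun x h => hs4 x (hs3 x (hs2 x (hs1 x h)))) hc4
    · refine createInt G i j d4 (hs4 _ (hs3 _ (hs2 _ hm1))) (hs4 _ (hs3 _ hm2))
        (hs4 _ hm3) hm4 hc4 hDC4 ?_
      refine k ((i+1,j+1) :: d4) (DC_cons ?_ hDC4)
        (fun x h => List.mem_cons_of_mem _ (hs4 x (hs3 x (hs2 x (hs1 x h)))))
        (List.mem_cons_self)
      intro d hd
      simp [prereq] at hd
      rcases hd with rfl | rfl | rfl | rfl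
      · exact hs4 _ (hs3 _ (hs2 _ hm1))
      · exact hs4 _ (hs3 _ hm2)
      · exact hs4 _ hm3
      · exact hm4
  termination_by i j _ => i + 2 * j
  decreasing_by all_goals omega

end Aux

/-- Lemma 4.5 of the paper.  If the tiling puzzle `G` is
solvable then `Γ_G ⊢ start` is intuitionistically derivable. -/
theorem solvable_implies_gammaG_start (G : Puzzle) :
    G.Solvable → Prov (GammaG G) aStart := by
  rintro ⟨m, n, hok⟩
  apply Aux.start_gen G (Aux.cvar (0,0)) (Aux.cvar_ge _)
  refine Prov.impI (Prov.impI (Prov.impI ?_))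
  have h00 : ((0,0) : ℕ × ℕ) ∈ [((0,0) : ℕ × ℕ)] := List.mem_singleton.mpr rfl
  have hDC : Aux.DC [(0,0)] := by
    intro c hc d hd
    simp only [List.mem_singleton] at hc
    subst hc
    simpa [Aux.prereq] using hd
  have main : Prov (Aux.ctx G [(0,0)]) aLupa := by
    refine Aux.ensure G m n [(0,0)] h00 hDC ?_
    intro done' hDC' hsub hm
    have ht : Prov (Aux.ctx G done') (aTile G (G.tiling m n) (Aux.cvar (m, n))) :=
      Prov.ax (Aux.atoms_sub hm (Aux.mem_atoms_tile (m, n)))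
    rw [hok] at ht
    exact Prov.impE
      (Aux.inst4 (Aux.cvar (m, n)) (Aux.cvar_ge _) (Prov.ax (Aux.gamma_sub _ Aux.fml4_mem))) ht
  exact main
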